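/- The function F(z) = z − √(z(1−z))·arcsin(√z) is monotonically nondecreasing on [0,1] with F(0) = 0 and F(1) = 1, hence is a valid cumulative distribution function on [0,1]. -/

import Mathlib

open Real Set

lemma aux_ucos {u : ℝ} (hu : 0 < u) (hu' : u < π) : u * Real.cos u ≤ Real.sin u := by
  rcases lt_or_ge u (π/2) with h | h
  · have htan := Real.lt_tan hu h
    have hc : 0 < Real.cos u := Real.cos_pos_of_mem_Ioo ⟨by linarith [Real.pi_pos], h⟩
    rw [Real.tan_eq_sin_div_cos, lt_div_iff₀ hc] at htan
    linarith
  · have hc : Real.cos u ≤ 0 := Real.cos_nonpos_of_pi_div_two_le_of_le h (by linarith)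
    have hs : 0 ≤ Real.sin u := Real.sin_nonneg_of_nonneg_of_le_pi hu.le hu'.le
    nlinarith

lemma aux_deriv {z : ℝ} (hz : z ∈ Ioo (0:ℝ) 1) :
    HasDerivAt (fun z : ℝ => z - Real.sqrt (z*(1-z)) * Real.arcsin (Real.sqrt z))
      (1/2 - (1-2*z) * Real.arcsin (Real.sqrt z) / (2 * Real.sqrt (z*(1-z)))) z := by
  obtain ⟨hz0, hz1⟩ := hz
  have hzz : (0:ℝ) < z*(1-z) := by nlinarith
  have hs : (0:ℝ) < Real.sqrt z := Real.sqrt_pos.mpr hz0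
  have hs1 : Real.sqrt z < 1 := by
    rw [show (1:ℝ) = Real.sqrt 1 by simp]
    exact Real.sqrt_lt_sqrt hz0.le hz1
  have hgpos : (0:ℝ) < Real.sqrt (z*(1-z)) := Real.sqrt_pos.mpr hzz
  have h1 : HasDerivAt (fun z : ℝ => z*(1-z)) (1-2*z) z := by
    have := (hasDerivAt_id z).mul ((hasDerivAt_const z (1:ℝ)).sub (hasDerivAt_id z))
    refine this.congr_deriv ?_; simp [id]; ring
  have h2 : HasDerivAt (fun z : ℝ => Real.sqrt (z*(1-z)))
      ((1-2*z) / (2 * Real.sqrt (z*(1-z)))) z := by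
    have := (Real.hasDerivAt_sqrt (ne_of_gt hzz)).comp z h1
    refine this.congr_deriv ?_; ring
  have h4 : HasDerivAt (fun z : ℝ => Real.arcsin (Real.sqrt z))
      (1 / Real.sqrt (1 - Real.sqrt z ^ 2) * (1 / (2 * Real.sqrt z))) z :=
    (Real.hasDerivAt_arcsin (by linarith) (ne_of_lt hs1)).comp z
      (Real.hasDerivAt_sqrt (ne_of_gt hz0))
  have h5 := (hasDerivAt_id z).sub (h2.mul h4)
  refine h5.congr_deriv ?_
  have hsq : Real.sqrt z ^ 2 = z := Real.sq_sqrt hz0.le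
  have hmul : Real.sqrt (z*(1-z)) = Real.sqrt z * Real.sqrt (1-z) :=
    Real.sqrt_mul hz0.le _
  have h1z : (0:ℝ) < Real.sqrt (1-z) := Real.sqrt_pos.mpr (by linarith)
  rw [hsq, hmul]
  field_simp
  ring

theorem cdf_valid :
    MonotoneOn (fun z : ℝ => z - Real.sqrt (z*(1-z)) * Real.arcsin (Real.sqrt z))
      (Icc (0:ℝ) 1)
    ∧ ((0:ℝ) - Real.sqrt (0*(1-0)) * Real.arcsin (Real.sqrt 0)) = 0
    ∧ ((1:ℝ) - Real.sqrt (1*(1-1)) * Real.arcsin (Real.sqrt 1)) = 1 := by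
  refine ⟨?_, by norm_num, by norm_num⟩
  have hcont : Continuous (fun z : ℝ => z - Real.sqrt (z*(1-z)) * Real.arcsin (Real.sqrt z)) := by
    exact continuous_id.sub ((Real.continuous_sqrt.comp (continuous_id.mul (continuous_const.sub continuous_id))).mul (Real.continuous_arcsin.comp Real.continuous_sqrt))
  apply monotoneOn_of_deriv_nonneg (convex_Icc 0 1) hcont.continuousOn
  · intro x hx
    rw [interior_Icc] at hx
    exact (aux_deriv hx).differentiableAt.differentiableWithinAt
  · intro x hx
    rw [interior_Icc] at hx
    rw [(aux_deriv hx).deriv]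
    obtain ⟨hz0, hz1⟩ := hx
    have hzz : (0:ℝ) < x*(1-x) := by nlinarith
    have hgpos : (0:ℝ) < Real.sqrt (x*(1-x)) := Real.sqrt_pos.mpr hzz
    have hs : (0:ℝ) < Real.sqrt x := Real.sqrt_pos.mpr hz0
    have hs1 : Real.sqrt x < 1 := by
      rw [show (1:ℝ) = Real.sqrt 1 by simp]
      exact Real.sqrt_lt_sqrt hz0.le hz1
    set θ := Real.arcsin (Real.sqrt x) with hθ
    have hθpos : 0 < θ := Real.arcsin_pos.mpr hs
    have hθlt : θ < π/2 := Real.arcsin_lt_pi_div_two.mpr hs1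
    have hsin : Real.sin θ = Real.sqrt x := Real.sin_arcsin (by linarith) hs1.le
    have hcos : Real.cos θ = Real.sqrt (1-x) := by
      rw [hθ, Real.cos_arcsin, Real.sq_sqrt hz0.le]
    have key := aux_ucos (by linarith : (0:ℝ) < 2*θ) (by linarith)
    rw [Real.sin_two_mul, Real.cos_two_mul, hsin, hcos] at key
    have hsq1 : Real.sqrt (1-x) ^ 2 = 1 - x := Real.sq_sqrt (by linarith)
    have hmul : Real.sqrt (x*(1-x)) = Real.sqrt x * Real.sqrt (1-x) :=
      Real.sqrt_mul hz0.le _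
    -- key : 2*θ * (2*(√(1-x))^2 - 1) ≤ 2*√x*√(1-x)
    have hineq : (1-2*x) * θ ≤ Real.sqrt (x*(1-x)) := by
      rw [hmul]; nlinarith [hsq1]
    have : (1-2*x) * θ / (2 * Real.sqrt (x*(1-x))) ≤ 1/2 := by
      rw [div_le_iff₀ (by linarith)]
      linarith
    linarith
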